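/- Let R be a complete discrete valuation ring. The mixed power series ring R⟨x_1,…,x_m⟩[[y_1,…,y_{m'}]] (restricted power series in x over R, then formal power series in y) is canonically isomorphic as a topological R-algebra to R[[y_1,…,y_{m'}]]⟨x_1,…,x_m⟩ (formal power series in y, then restricted power series in x with respect to the ideal generated by ϖ and the y_j). -/

import Mathlib

/-- Identifying both mixed power series rings `R⟨x⟩[[y]]` and `R[[y]]⟨x⟩` with subsets of
the full power series ring `R[[x,y]]` via their coefficients, they coincide: a power
series `f = Σ a_{β,γ} x^β y^γ` lies in `R⟨x⟩[[y]]` (for each `y`-exponent `γ` the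
`x`-coefficients tend ϖ-adically to `0`) if and only if it lies in `R[[y]]⟨x⟩` (the
`x`-coefficients, as elements of `R[[y]]`, tend to `0` for the `(ϖ, y)`-adic topology,
i.e. for each `ℓ` only finitely many `β` admit some `γ` with `|γ| < ℓ` and
`a_{β,γ} ∉ (ϖ)^{ℓ−|γ|}`). This is the canonical topological `R`-algebra isomorphism
`R⟨x⟩[[y]] ≅ R[[y]]⟨x⟩`. -/
theorem mixedPowerSeries_comm {R : Type*} [CommRing R] [IsDomain R]
    [IsDiscreteValuationRing R] [IsAdicComplete (IsLocalRing.maximalIdeal R) R]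
    (ϖ : R) (hϖ : Irreducible ϖ) (m m' : ℕ) :
    {f : MvPowerSeries (Fin m ⊕ Fin m') R |
        ∀ γ : Fin m' →₀ ℕ, ∀ ℓ : ℕ,
          {β : Fin m →₀ ℕ |
            MvPowerSeries.coeff (Finsupp.sumElim β γ) f ∉ Ideal.span {ϖ} ^ ℓ}.Finite} =
      {f : MvPowerSeries (Fin m ⊕ Fin m') R |
        ∀ ℓ : ℕ,
          {β : Fin m →₀ ℕ | ∃ γ : Fin m' →₀ ℕ,
            (γ.sum fun _ e => e) < ℓ ∧
              MvPowerSeries.coeff (Finsupp.sumElim β γ) f ∉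
                Ideal.span {ϖ} ^ (ℓ - γ.sum fun _ e => e)}.Finite} := by
  ext f
  simp only [Set.mem_setOf_eq]
  constructor
  · intro h ℓ
    have hγfin : {γ : Fin m' →₀ ℕ | (γ.sum fun _ e => e) < ℓ}.Finite := by
      apply (Set.finite_Iic (Finsupp.equivFunOnFinite.symm fun _ => ℓ)).subset
      intro γ hγ
      simp only [Set.mem_setOf_eq] at hγ
      intro i
      have : γ i ≤ γ.sum fun _ e => e := by
        by_cases hi : i ∈ γ.support
        · exact Finset.single_le_sum (fun _ _ => Nat.zero_le _) hi
        · simp [Finsupp.notMem_support_iff.mp hi]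
      calc γ i ≤ γ.sum fun _ e => e := this
        _ ≤ ℓ := hγ.le
        _ = Finsupp.equivFunOnFinite.symm (fun _ => ℓ) i := rfl
    have : {β : Fin m →₀ ℕ | ∃ γ : Fin m' →₀ ℕ,
            (γ.sum fun _ e => e) < ℓ ∧
              MvPowerSeries.coeff (Finsupp.sumElim β γ) f ∉
                Ideal.span {ϖ} ^ (ℓ - γ.sum fun _ e => e)} ⊆
        ⋃ γ ∈ {γ : Fin m' →₀ ℕ | (γ.sum fun _ e => e) < ℓ},
          {β : Fin m →₀ ℕ | MvPowerSeries.coeff (Finsupp.sumElim β γ) f ∉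
            Ideal.span {ϖ} ^ (ℓ - γ.sum fun _ e => e)} := by
      intro β hβ
      obtain ⟨γ, h1, h2⟩ := hβ
      exact Set.mem_biUnion h1 h2
    exact Set.Finite.subset (Set.Finite.biUnion hγfin fun γ _ => h γ _) this
  · intro h γ ℓ
    apply (h (ℓ + (γ.sum fun _ e => e) + 1)).subset
    intro β hβ
    refine ⟨γ, by omega, ?_⟩
    have : ℓ + (γ.sum fun _ e => e) + 1 - (γ.sum fun _ e => e) = ℓ + 1 := by omega
    rw [this]
    intro hc
    exact hβ (Ideal.pow_le_pow_right (by omega) hc)
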